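/- Let α > 0 and β > 0 with α ≠ β. Suppose that for all n, m ≥ 2 and every joint distribution R = (r_{kl}) ∈ Δ_{nm} with strictly positive marginal P, the identity Σ_{k=1}^n Σ_{l=1}^m r^{(α)}_{kl} / (Σ_{j=1}^m q_{j|k}^β) = Σ_{k=1}^n Σ_{l=1}^m r^{(β)}_{kl} / (Σ_{j=1}^m q_{j|k}^β) holds. Then β = 1. (In particular, it suffices to check the identity fails for n = m = 2 with P = (1/2, 1/2), Q_{|1} = (1, 0), Q_{|2} = (1/2, 1/2) whenever β ≠ 1.) -/

import Mathlib

open Finset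

noncomputable section

/-- `p` is a probability distribution on `Fin n`. -/
def IsDist {n : ℕ} (p : Fin n → ℝ) : Prop := (∀ i, 0 ≤ p i) ∧ ∑ i, p i = 1

/-- The uniform distribution on `Fin n`. -/
def unif (n : ℕ) : Fin n → ℝ := fun _ => (n : ℝ)⁻¹

/-- Flatten a joint distribution `r : Fin n → Fin m → ℝ` into a vector on `Fin (n*m)`. -/
def joint {n m : ℕ} (r : Fin n → Fin m → ℝ) : Fin (n * m) → ℝ :=
  fun q => r (finProdFinEquiv.symm q).1 (finProdFinEquiv.symm q).2

/-- Marginal distribution of the first coordinate. -/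
def marg {n m : ℕ} (r : Fin n → Fin m → ℝ) : Fin n → ℝ := fun k => ∑ l, r k l

/-- Conditional distribution of the second coordinate given the first equals `k`. -/
def condDist {n m : ℕ} (r : Fin n → Fin m → ℝ) (k : Fin n) : Fin m → ℝ :=
  fun l => r k l / marg r k

/-- The `α`-escort distribution of `p` (with the convention `0 ^ α = 0`). -/
def escort (α : ℝ) {n : ℕ} (p : Fin n → ℝ) : Fin n → ℝ :=
  fun k => p k ^ α / ∑ i, p i ^ α

/-- The `γ`-escort of a joint distribution `r`. -/
def jescort (γ : ℝ) {n m : ℕ} (r : Fin n → Fin m → ℝ) (k : Fin n) (l : Fin m) : ℝ :=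
  r k l ^ γ / ∑ i, ∑ j, r i j ^ γ

/-- Equation (19) of the paper: the escort identity forces `β = 1`. -/
theorem escort_identity_forces_beta_one
    (α β : ℝ) (hα : 0 < α) (hβ : 0 < β) (hαβ : α ≠ β)
    (hid : ∀ n m, 2 ≤ n → 2 ≤ m → ∀ r : Fin n → Fin m → ℝ,
      IsDist (joint r) → (∀ k, 0 < marg r k) →
      ∑ k, ∑ l, jescort α r k l / (∑ j, condDist r k j ^ β) =
      ∑ k, ∑ l, jescort β r k l / (∑ j, condDist r k j ^ β)) :
    β = 1 := by
  set r : Fin 2 → Fin 2 → ℝ := ![![1/2, 0], ![1/4, 1/4]] with hr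
  have hrnn : ∀ i j, 0 ≤ r i j := by
    intro i j; fin_cases i <;> fin_cases j <;> norm_num [hr]
  have hmarg : ∀ k, marg r k = 1/2 := by
    intro k; fin_cases k <;> simp [marg, Fin.sum_univ_two, hr] <;> norm_num
  have hmargpos : ∀ k, 0 < marg r k := by intro k; rw [hmarg]; norm_num
  have hdist : IsDist (joint r) := by
    refine ⟨fun q => hrnn _ _, ?_⟩
    have : (∑ q, joint r q) = ∑ p : Fin 2 × Fin 2, r p.1 p.2 :=
      finProdFinEquiv.symm.sum_comp (fun p : Fin 2 × Fin 2 => r p.1 p.2)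
    rw [this, Fintype.sum_prod_type, Fin.sum_univ_two]
    simp [Fin.sum_univ_two, hr]; norm_num
  have h := hid 2 2 le_rfl le_rfl r hdist hmargpos
  -- set up abbreviations
  set a : ℝ := (1/2 : ℝ) ^ α with ha
  set b : ℝ := (1/2 : ℝ) ^ β with hb
  have hapos : 0 < a := Real.rpow_pos_of_pos (by norm_num) α
  have hbpos : 0 < b := Real.rpow_pos_of_pos (by norm_num) β
  have h4a : (1/4 : ℝ) ^ α = a * a := by
    rw [show (1/4 : ℝ) = (1/2) * (1/2) by norm_num, Real.mul_rpow (by norm_num) (by norm_num)]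
  have h4b : (1/4 : ℝ) ^ β = b * b := by
    rw [show (1/4 : ℝ) = (1/2) * (1/2) by norm_num, Real.mul_rpow (by norm_num) (by norm_num)]
  have h0a : (0:ℝ) ^ α = 0 := Real.zero_rpow hα.ne'
  have h0b : (0:ℝ) ^ β = 0 := Real.zero_rpow hβ.ne'
  have h1b : (1:ℝ) ^ β = 1 := Real.one_rpow β
  simp only [jescort, condDist, Fin.sum_univ_two, hmarg] at h
  simp only [hr] at h
  norm_num [h4a, h4b, h0a, h0b, h1b] at h
  clear_value a b
  clear hid
  rw [← ha, ← hb] at h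
  have hden1 : (0:ℝ) < a + (a*a + a*a) := by nlinarith
  have hden2 : (0:ℝ) < b + (b*b + b*b) := by nlinarith
  field_simp at h
  have hC : (0:ℝ) < 4*a*b^2*(a + (a*a+a*a))*(b + (b*b+b*b)) := by
    have := mul_pos (mul_pos (mul_pos (mul_pos (by norm_num : (0:ℝ) < 4) hapos)
      (mul_pos hbpos hbpos)) hden1) hden2
    nlinarith [this]
  have key : (2*b - 1) * (b - a) = 0 := by
    have hC' : (4*a*b^2*(a + (a*a+a*a))*(b + (b*b+b*b))) * ((2*b - 1) * (b - a)) = 0 := by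
      linear_combination (4*a*b^2*(a + (a*a+a*a))*(b + (b*b+b*b))) * h
    rcases mul_eq_zero.1 hC' with h' | h'
    · exact absurd h' hC.ne'
    · exact h'
  have hlog : Real.log (1/2 : ℝ) ≠ 0 := ne_of_lt (Real.log_neg (by norm_num) (by norm_num))
  rcases mul_eq_zero.1 key with h' | h'
  · -- 2b = 1, i.e. (1/2)^β = 1/2
    have hb2 : (1/2 : ℝ) ^ β = 1/2 := by rw [← hb]; linarith
    have := congrArg Real.log hb2
    rw [Real.log_rpow (by norm_num)] at this
    have : β * Real.log (1/2) = 1 * Real.log (1/2) := by rw [this]; ring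
    exact mul_right_cancel₀ hlog this
  · -- a = b, contradiction with α ≠ β
    exfalso
    have hab : (1/2 : ℝ) ^ α = (1/2 : ℝ) ^ β := by rw [← ha, ← hb]; linarith
    have := congrArg Real.log hab
    rw [Real.log_rpow (by norm_num), Real.log_rpow (by norm_num)] at this
    exact hαβ (mul_right_cancel₀ hlog this)
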